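/- Three points c₁, c₂, c₃ in F² (F a field of characteristic zero, or more specifically a subfield of a commutative field extending ℝ) are affinely dependent if and only if their Cayley–Menger determinant Δ(c₁,c₂,c₃) = det [[0,1,1,1],[1,0,φ(c₁,c₂),φ(c₁,c₃)],[1,φ(c₂,c₁),0,φ(c₂,c₃)],[1,φ(c₃,c₁),φ(c₃,c₂),0]] equals 0. -/

import Mathlib

lemma cross_lemma {F : Type*} [Field F] (u v : F × F) :
    (¬ LinearIndependent F ![u, v]) ↔ u.1 * v.2 - u.2 * v.1 = 0 := by
  constructor
  · intro h
    by_contra hc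
    apply h
    rw [LinearIndependent.pair_iff]
    intro s t hst
    have h1 : s * u.1 + t * v.1 = 0 := congrArg Prod.fst hst
    have h2 : s * u.2 + t * v.2 = 0 := congrArg Prod.snd hst
    constructor
    · have : s * (u.1 * v.2 - u.2 * v.1) = 0 := by linear_combination v.2 * h1 - v.1 * h2
      rcases mul_eq_zero.1 this with h | h
      · exact h
      · exact absurd h hc
    · have : t * (u.1 * v.2 - u.2 * v.1) = 0 := by linear_combination u.1 * h2 - u.2 * h1
      rcases mul_eq_zero.1 this with h | h
      · exact h
      · exact absurd h hc
  · intro hc h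
    rw [LinearIndependent.pair_iff] at h
    by_cases hu : u = 0
    · have := (h 1 0 (by simp [hu])).1
      simp at this
    · by_cases h1 : u.1 ≠ 0
      · have := h v.1 (-u.1)
          (Prod.ext (by simp; ring) (by simp; linear_combination -hc))
        exact h1 (neg_eq_zero.mp this.2)
      · push_neg at h1
        have h2 : u.2 ≠ 0 := fun h2 => hu (Prod.ext h1 h2)
        have := h v.2 (-u.2)
          (Prod.ext (by simp; linear_combination hc) (by simp; ring))
        exact h2 (neg_eq_zero.mp this.2)

lemma cm_det {F : Type*} [CommRing F] (a b c : F) :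
    Matrix.det !![(0:F), 1, 1, 1; 1, 0, a, b; 1, a, 0, c; 1, b, c, 0]
      = a ^ 2 + b ^ 2 + c ^ 2 - 2 * a * b - 2 * a * c - 2 * b * c := by
  simp [Matrix.det_succ_row_zero, Matrix.det_fin_three, Fin.sum_univ_succ,
    Fin.succAbove, Fin.castSucc, Fin.castAdd, Fin.castLE]
  ring

/-- Cayley–Menger criterion for three points in the plane over a field `F` of
characteristic zero: `c₁, c₂, c₃` are affinely dependent (i.e. the vectors
`c₂ - c₁` and `c₃ - c₁` are linearly dependent) iff their Cayley–Menger
determinant vanishes. Here `φ p q = (p₁-q₁)² + (p₂-q₂)²`. -/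
theorem stmt_0 {F : Type*} [Field F] [CharZero F]
    (φ : F × F → F × F → F)
    (hφ : ∀ p q : F × F, φ p q = (p.1 - q.1) ^ 2 + (p.2 - q.2) ^ 2)
    (c₁ c₂ c₃ : F × F) :
    (¬ LinearIndependent F ![c₂ - c₁, c₃ - c₁]) ↔
      Matrix.det !![0, 1, 1, 1;
                    1, 0, φ c₁ c₂, φ c₁ c₃;
                    1, φ c₂ c₁, 0, φ c₂ c₃;
                    1, φ c₃ c₁, φ c₃ c₂, 0] = 0 := by
  rw [cross_lemma]
  have hsym : φ c₂ c₁ = φ c₁ c₂ := by rw [hφ, hφ]; ring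
  have hsym2 : φ c₃ c₁ = φ c₁ c₃ := by rw [hφ, hφ]; ring
  have hsym3 : φ c₃ c₂ = φ c₂ c₃ := by rw [hφ, hφ]; ring
  rw [hsym, hsym2, hsym3, cm_det]
  have hu1 : (c₂ - c₁).1 = c₂.1 - c₁.1 := rfl
  have hu2 : (c₂ - c₁).2 = c₂.2 - c₁.2 := rfl
  have hv1 : (c₃ - c₁).1 = c₃.1 - c₁.1 := rfl
  have hv2 : (c₃ - c₁).2 = c₃.2 - c₁.2 := rfl
  have key : φ c₁ c₂ ^ 2 + φ c₁ c₃ ^ 2 + φ c₂ c₃ ^ 2 - 2 * φ c₁ c₂ * φ c₁ c₃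
      - 2 * φ c₁ c₂ * φ c₂ c₃ - 2 * φ c₁ c₃ * φ c₂ c₃
      = -4 * ((c₂ - c₁).1 * (c₃ - c₁).2 - (c₂ - c₁).2 * (c₃ - c₁).1) ^ 2 := by
    rw [hφ, hφ, hφ, hu1, hu2, hv1, hv2]; ring
  rw [key]
  constructor
  · intro h; rw [h]; ring
  · intro h
    have h4 : ((c₂ - c₁).1 * (c₃ - c₁).2 - (c₂ - c₁).2 * (c₃ - c₁).1) ^ 2 = 0 := by
      linear_combination (-(1:F)/4) * h
    exact pow_eq_zero_iff (by norm_num) |>.mp h4
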